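/- Let d ≥ 1, let H be any d×d real matrix, let δ, η ∈ ℝ, and let λ ∈ ℂ with λ ≠ 0. Then the determinant of the 3d×3d complex matrix [[(1−δ−λ)I, 0, −ηI], [I, −λI, 0], [H, −H, −λI]] equals λ^{2d} · det((1−δ−λ)I − (η/λ)H + (η/λ²)H). -/

import Mathlib

open Matrix

noncomputable section

/-- A `3d × 3d` matrix built from a `3 × 3` array of `d × d` blocks. -/
def blk3 {R : Type*} {d : ℕ} (B : Fin 3 → Fin 3 → Matrix (Fin d) (Fin d) R) :
    Matrix (Fin 3 × Fin d) (Fin 3 × Fin d) R :=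
  Matrix.of fun p q => B p.1 q.1 p.2 q.2

/-- Block-determinant factorization used in the proof of Lemma 3.3: for `λ ≠ 0`,
`det [[(1−δ−λ)I, 0, −ηI], [I, −λI, 0], [H, −H, −λI]]
  = λ^{2d} · det((1−δ−λ)I − (η/λ)H + (η/λ²)H)`. -/
theorem stmt3 (d : ℕ) (hd : 1 ≤ d) (H : Matrix (Fin d) (Fin d) ℝ) (δ η : ℝ)
    (lam : ℂ) (hlam0 : lam ≠ 0) :
    (blk3 ![![(1 - (δ : ℂ) - lam) • 1, 0, (-(η : ℂ)) • 1],
            ![1, (-lam) • 1, 0],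
            ![H.map (Complex.ofReal ·), -(H.map (Complex.ofReal ·)), (-lam) • 1]]).det
      = lam ^ (2 * d) *
        ((1 - (δ : ℂ) - lam) • (1 : Matrix (Fin d) (Fin d) ℂ)
          - ((η : ℂ) / lam) • H.map (Complex.ofReal ·)
          + ((η : ℂ) / lam ^ 2) • H.map (Complex.ofReal ·)).det := by
  have hnl : (-lam) ≠ 0 := neg_ne_zero.mpr hlam0
  have e2 : lam * (lam ^ 2)⁻¹ = lam⁻¹ := by field_simp
  have e2b : (lam ^ 2)⁻¹ * lam = lam⁻¹ := by field_simp
  set H' : Matrix (Fin d) (Fin d) ℂ := H.map (Complex.ofReal ·) with hH'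
  let e : Fin 3 × Fin d ≃ (Fin d ⊕ (Fin d ⊕ Fin d)) :=
    { toFun := fun p => ![Sum.inl p.2, Sum.inr (Sum.inl p.2), Sum.inr (Sum.inr p.2)] p.1
      invFun := Sum.elim (fun i => (0, i)) (Sum.elim (fun i => (1, i)) (fun i => (2, i)))
      left_inv := by rintro ⟨a, i⟩; fin_cases a <;> rfl
      right_inv := by rintro (i | i | i) <;> rfl }
  set A : Matrix (Fin d) (Fin d) ℂ := (1 - (δ : ℂ) - lam) • 1 with hA
  set B : Matrix (Fin d) (Fin d ⊕ Fin d) ℂ := fromCols 0 ((-(η : ℂ)) • 1) with hB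
  set C : Matrix (Fin d ⊕ Fin d) (Fin d) ℂ := fromRows 1 H' with hC
  set D : Matrix (Fin d ⊕ Fin d) (Fin d ⊕ Fin d) ℂ :=
    fromBlocks ((-lam) • 1) 0 (-H') ((-lam) • 1) with hD
  set Dinv : Matrix (Fin d ⊕ Fin d) (Fin d ⊕ Fin d) ℂ :=
    fromBlocks ((-lam)⁻¹ • 1) 0 ((lam ^ 2)⁻¹ • H') ((-lam)⁻¹ • 1) with hDinv
  have hDD : Dinv * D = 1 ∧ D * Dinv = 1 := by
    constructor <;>
    · rw [hD, hDinv, fromBlocks_multiply, ← fromBlocks_one]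
      congr 1 <;>
        simp [Matrix.smul_mul, Matrix.mul_smul, smul_smul, inv_mul_cancel₀ hnl,
          mul_inv_cancel₀ hnl, inv_neg, e2, e2b, inv_mul_cancel₀ hlam0,
          mul_inv_cancel₀ hlam0]
  haveI : Invertible D := ⟨Dinv, hDD.1, hDD.2⟩
  have hM : (blk3 ![![(1 - (δ : ℂ) - lam) • 1, 0, (-(η : ℂ)) • 1],
            ![1, (-lam) • 1, 0],
            ![H', -H', (-lam) • 1]])
      = (fromBlocks A B C D).submatrix e e := by
    ext ⟨a, i⟩ ⟨b, j⟩
    fin_cases a <;> fin_cases b <;>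
      simp [blk3, e, hA, hB, hC, hD, fromBlocks, fromRows_apply_inl, fromRows_apply_inr, fromCols]
  rw [hM, Matrix.det_submatrix_equiv_self, Matrix.det_fromBlocks₂₂]
  have hinv : (⅟D : Matrix _ _ ℂ) = Dinv := invOf_eq_right_inv hDD.2
  have hdetD : D.det = lam ^ (2 * d) := by
    rw [hD, Matrix.det_fromBlocks_zero₁₂, Matrix.det_smul]
    simp only [Fintype.card_fin, det_one, mul_one]
    rw [← pow_add, ← two_mul, pow_mul, neg_sq, ← pow_mul]
  have hBDC : B * ⅟D * C
      = ((-(η : ℂ)) * (lam ^ 2)⁻¹) • H' + ((-(η : ℂ)) * (-lam)⁻¹) • H' := by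
    rw [hinv, hB, hC, hDinv, fromCols_mul_fromBlocks, fromCols_mul_fromRows]
    simp [Matrix.smul_mul, Matrix.mul_smul, smul_smul, -Complex.coe_smul]
    module
  rw [hdetD, hBDC]
  congr 2
  rw [hA]
  have h1 : (-(η : ℂ)) * (-lam)⁻¹ = (η : ℂ) / lam := by
    field_simp
  have h2 : (-(η : ℂ)) * (lam ^ 2)⁻¹ = -((η : ℂ) / lam ^ 2) := by
    field_simp
  rw [h1, h2, neg_smul]
  abel
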